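/- Let E, F be real Banach spaces and let k be a natural number with k < dim E and k < dim F. If T₀ ∈ B(E,F) has finite-dimensional range with dim range T₀ = k, then the equivalence class T̃₀ = { T ∈ B(E,F) : T double splitting and T₀ ≈ T } (for the common-complement chain relation ≈) equals F_k = { T ∈ B(E,F) : dim range T = k }. -/

import Mathlib

section AuxLemmas

open Module Submodule LinearMap

section Aux

variable {K : Type*} [Field K] {V : Type*} [AddCommGroup V] [Module K V]

lemma aux_exists_notMem_of_ne_top (A B : Submodule K V) (hA : A ≠ ⊤) (hB : B ≠ ⊤) :
    ∃ v : V, v ∉ A ∧ v ∉ B := by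
  obtain ⟨a, ha⟩ : ∃ a, a ∉ A := by
    by_contra h; push_neg at h; exact hA (eq_top_iff.2 fun x _ => h x)
  obtain ⟨b, hb⟩ : ∃ b, b ∉ B := by
    by_contra h; push_neg at h; exact hB (eq_top_iff.2 fun x _ => h x)
  by_cases hab : a ∈ B
  · by_cases hba : b ∈ A
    · refine ⟨a + b, fun h => ha ?_, fun h => hb ?_⟩
      · have := A.sub_mem h hba; simpa using this
      · have := B.sub_mem h hab; simpa using this
    · exact ⟨b, hba, hb⟩
  · exact ⟨a, ha, hab⟩

lemma aux_exists_disjoint_pair (N₀ N₁ : Submodule K V) :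
    ∀ d : ℕ,
      (∀ W : Submodule K V, FiniteDimensional K W → finrank K W < d → N₀ ⊔ W ≠ ⊤) →
      (∀ W : Submodule K V, FiniteDimensional K W → finrank K W < d → N₁ ⊔ W ≠ ⊤) →
      ∃ R : Submodule K V, FiniteDimensional K R ∧ finrank K R = d ∧ R ⊓ N₀ = ⊥ ∧ R ⊓ N₁ = ⊥
  | 0, _, _ => ⟨⊥, inferInstance, finrank_bot K V, bot_inf_eq N₀, bot_inf_eq N₁⟩
  | (d + 1), h₀, h₁ => by
    obtain ⟨R, hRfin, hRrk, hR0, hR1⟩ := aux_exists_disjoint_pair N₀ N₁ d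
      (fun W hW hlt => h₀ W hW (hlt.trans (Nat.lt_succ_self d)))
      (fun W hW hlt => h₁ W hW (hlt.trans (Nat.lt_succ_self d)))
    have hne0 : N₀ ⊔ R ≠ ⊤ := h₀ R hRfin (by omega)
    have hne1 : N₁ ⊔ R ≠ ⊤ := h₁ R hRfin (by omega)
    obtain ⟨v, hv0, hv1⟩ := aux_exists_notMem_of_ne_top _ _ hne0 hne1
    have hvR : v ∉ R := fun h => hv0 (Submodule.mem_sup_right h)
    have hv_ne : v ≠ 0 := fun h => hvR (h ▸ R.zero_mem)
    haveI : FiniteDimensional K (K ∙ v) := inferInstance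
    have key : ∀ N : Submodule K V, R ⊓ N = ⊥ → v ∉ N ⊔ R → (R ⊔ K ∙ v) ⊓ N = ⊥ := by
      intro N hRN hvN
      rw [eq_bot_iff]
      intro x hx
      rw [Submodule.mem_inf] at hx
      obtain ⟨hx1, hx2⟩ := hx
      rw [Submodule.mem_sup] at hx1
      obtain ⟨r, hr, z, hz, rfl⟩ := hx1
      rw [Submodule.mem_span_singleton] at hz
      obtain ⟨c, rfl⟩ := hz
      rcases eq_or_ne c 0 with rfl | hc
      · have : r ∈ R ⊓ N := ⟨hr, by simpa using hx2⟩
        rw [hRN] at this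
        simpa using this
      · exfalso
        apply hvN
        have h1 : c • v ∈ N ⊔ R := by
          have h2 : c • v = (r + c • v) - r := by abel
          rw [h2]
          exact Submodule.sub_mem _ (Submodule.mem_sup_left hx2) (Submodule.mem_sup_right hr)
        have h3 := Submodule.smul_mem _ c⁻¹ h1
        rwa [smul_smul, inv_mul_cancel₀ hc, one_smul] at h3
    have hinf : R ⊓ (K ∙ v) = ⊥ := by
      rw [eq_bot_iff]
      intro x hx
      rw [Submodule.mem_inf] at hx
      obtain ⟨hxR, hxv⟩ := hx
      rw [Submodule.mem_span_singleton] at hxv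
      obtain ⟨c, rfl⟩ := hxv
      rcases eq_or_ne c 0 with rfl | hc
      · simp
      · exfalso
        apply hvR
        have h3 := Submodule.smul_mem _ c⁻¹ hxR
        rwa [smul_smul, inv_mul_cancel₀ hc, one_smul] at h3
    refine ⟨R ⊔ K ∙ v, inferInstance, ?_, key N₀ hR0 hv0, key N₁ hR1 hv1⟩
    have hkey := Submodule.finrank_sup_add_finrank_inf_eq R (K ∙ v)
    rw [hinf, hRrk, finrank_span_singleton hv_ne] at hkey
    simpa using hkey

lemma aux_sup_ne_top_of_finrank_lt (N : Submodule K V) [FiniteDimensional K (V ⧸ N)]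
    (W : Submodule K V) [FiniteDimensional K W] (hW : finrank K W < finrank K (V ⧸ N)) :
    N ⊔ W ≠ ⊤ := by
  intro h
  have h2 : Submodule.map N.mkQ W = ⊤ := (Submodule.map_mkQ_eq_top N W).2 h
  have h3 : finrank K (V ⧸ N) ≤ finrank K W := by
    calc finrank K (V ⧸ N) = finrank K (⊤ : Submodule K (V ⧸ N)) := (finrank_top _ _).symm
    _ = finrank K (Submodule.map N.mkQ W) := by rw [h2]
    _ ≤ finrank K W := Submodule.finrank_map_le N.mkQ W
  omega

lemma aux_isCompl_of_disjoint_finrank (N R : Submodule K V) [FiniteDimensional K (V ⧸ N)]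
    [FiniteDimensional K R] (hd : R ⊓ N = ⊥) (hr : finrank K R = finrank K (V ⧸ N)) :
    IsCompl N R := by
  have hinj : Function.Injective (N.mkQ ∘ₗ R.subtype) := by
    rw [← LinearMap.ker_eq_bot, LinearMap.ker_comp, Submodule.ker_mkQ, eq_bot_iff]
    rintro ⟨x, hxR⟩ hx
    rw [Submodule.mem_comap, Submodule.subtype_apply] at hx
    have : x ∈ R ⊓ N := ⟨hxR, hx⟩
    rw [hd] at this
    simpa using this
  have hrange : LinearMap.range (N.mkQ ∘ₗ R.subtype) = ⊤ := by
    apply Submodule.eq_top_of_finrank_eq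
    rw [LinearMap.finrank_range_of_inj hinj, hr]
  constructor
  · rw [disjoint_iff, inf_comm, hd]
  · rw [codisjoint_iff, ← Submodule.map_mkQ_eq_top]
    have h4 : Submodule.map N.mkQ R = LinearMap.range (N.mkQ ∘ₗ R.subtype) := by
      rw [LinearMap.range_comp, Submodule.range_subtype]
    rw [h4, hrange]

lemma aux_exists_common_compl (N₀ N₁ : Submodule K V) (k : ℕ)
    [FiniteDimensional K (V ⧸ N₀)] [FiniteDimensional K (V ⧸ N₁)]
    (h₀ : finrank K (V ⧸ N₀) = k) (h₁ : finrank K (V ⧸ N₁) = k) :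
    ∃ R : Submodule K V, FiniteDimensional K R ∧ IsCompl N₀ R ∧ IsCompl N₁ R := by
  obtain ⟨R, hfin, hrk, hd0, hd1⟩ := aux_exists_disjoint_pair N₀ N₁ k
    (fun W hW hlt => by
      haveI := hW
      exact aux_sup_ne_top_of_finrank_lt N₀ W (by omega))
    (fun W hW hlt => by
      haveI := hW
      exact aux_sup_ne_top_of_finrank_lt N₁ W (by omega))
  haveI := hfin
  exact ⟨R, hfin, aux_isCompl_of_disjoint_finrank N₀ R hd0 (by omega),
    aux_isCompl_of_disjoint_finrank N₁ R hd1 (by omega)⟩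

end Aux

section AuxNormed

open Module Submodule LinearMap ContinuousLinearMap

variable {F : Type*} [NormedAddCommGroup F] [NormedSpace ℝ F] [CompleteSpace F]


private lemma final_isCompl {H W C G : Submodule ℝ F} (hcompl : IsCompl H W) (hCH : C ≤ H)
    (hyp : G ≤ H ∧ G ⊓ C = ⊥ ∧ G ⊔ C = H) : IsCompl G (C ⊔ W) := by
  obtain ⟨hGH, hGC, hGCH⟩ := hyp
  constructor
  · rw [disjoint_iff, eq_bot_iff]
    intro x hx
    rw [Submodule.mem_inf] at hx
    obtain ⟨hxG, hxS⟩ := hx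
    rw [Submodule.mem_sup] at hxS
    obtain ⟨c, hc, w, hw, rfl⟩ := hxS
    have hwH : w ∈ H := by
      have h5 : (c + w) - c ∈ H := H.sub_mem (hGH hxG) (hCH hc)
      simpa using h5
    have hw0 : w = 0 := by
      have h5 : w ∈ H ⊓ W := ⟨hwH, hw⟩
      rw [disjoint_iff.1 hcompl.disjoint] at h5
      simpa using h5
    subst hw0
    rw [add_zero] at hxG ⊢
    have h5 : c ∈ G ⊓ C := ⟨hxG, hc⟩
    rw [hGC] at h5
    simpa using h5
  · rw [codisjoint_iff, ← sup_assoc, hGCH]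
    exact codisjoint_iff.1 hcompl.codisjoint

lemma aux_exists_common_closed_compl (G₀ G₁ : Submodule ℝ F)
    [FiniteDimensional ℝ G₀] [FiniteDimensional ℝ G₁]
    (h : finrank ℝ G₀ = finrank ℝ G₁) :
    ∃ S : Submodule ℝ F, IsClosed (S : Set F) ∧ IsCompl G₀ S ∧ IsCompl G₁ S := by
  set H : Submodule ℝ F := G₀ ⊔ G₁ with hH
  haveI : FiniteDimensional ℝ H := Submodule.finiteDimensional_sup G₀ G₁
  have hG₀H : G₀ ≤ H := le_sup_left
  have hG₁H : G₁ ≤ H := le_sup_right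
  obtain ⟨f, hf⟩ := Submodule.ClosedComplemented.of_finiteDimensional H
  set W : Submodule ℝ F := LinearMap.ker (f : F →ₗ[ℝ] H) with hW
  have hWclosed : IsClosed (W : Set F) := isClosed_ker f
  have hcompl : IsCompl H W := LinearMap.isCompl_of_proj hf
  -- work inside H
  set N₀ : Submodule ℝ H := Submodule.comap H.subtype G₀ with hN₀
  set N₁ : Submodule ℝ H := Submodule.comap H.subtype G₁ with hN₁
  have e₀ : N₀ ≃ₗ[ℝ] G₀ := Submodule.comapSubtypeEquivOfLe hG₀H
  have e₁ : N₁ ≃ₗ[ℝ] G₁ := Submodule.comapSubtypeEquivOfLe hG₁H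
  haveI : FiniteDimensional ℝ N₀ := e₀.symm.finiteDimensional
  haveI : FiniteDimensional ℝ N₁ := e₁.symm.finiteDimensional
  have hq₀ : finrank ℝ (H ⧸ N₀) + finrank ℝ N₀ = finrank ℝ H :=
    Submodule.finrank_quotient_add_finrank N₀
  have hq₁ : finrank ℝ (H ⧸ N₁) + finrank ℝ N₁ = finrank ℝ H :=
    Submodule.finrank_quotient_add_finrank N₁
  have hrk₀ : finrank ℝ N₀ = finrank ℝ G₀ := e₀.finrank_eq
  have hrk₁ : finrank ℝ N₁ = finrank ℝ G₁ := e₁.finrank_eq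
  obtain ⟨C', hC'fin, hcompl₀, hcompl₁⟩ := aux_exists_common_compl N₀ N₁
    (finrank ℝ H - finrank ℝ G₀) (by omega) (by omega)
  set C : Submodule ℝ F := Submodule.map H.subtype C' with hC
  haveI : FiniteDimensional ℝ C := Module.Finite.map C' H.subtype
  have hCclosed : IsClosed (C : Set F) := C.closed_of_finiteDimensional
  have hCH : C ≤ H := by
    rw [hC]; rintro x ⟨y, _, rfl⟩; exact y.2
  -- transferred compl facts
  have hmap : ∀ (N : Submodule ℝ H) (G : Submodule ℝ F), G ≤ H →
      N = Submodule.comap H.subtype G → IsCompl N C' → G ⊓ C = ⊥ ∧ G ⊔ C = H := by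
    intro N G hGH hNdef hc
    constructor
    · have h1 : Submodule.map H.subtype (N ⊓ C') = ⊥ := by
        rw [disjoint_iff.1 hc.disjoint, Submodule.map_bot]
      rw [Submodule.map_inf _ (Submodule.injective_subtype H), hNdef,
        Submodule.map_comap_subtype, inf_comm H G, inf_eq_left.2 hGH] at h1
      exact h1
    · have h1 : Submodule.map H.subtype (N ⊔ C') = H := by
        rw [codisjoint_iff.1 hc.codisjoint, Submodule.map_top, Submodule.range_subtype]
      rw [Submodule.map_sup, hNdef, Submodule.map_comap_subtype,
        inf_comm H G, inf_eq_left.2 hGH] at h1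
      exact h1
  obtain ⟨hG₀C, hG₀CH⟩ := hmap N₀ G₀ hG₀H hN₀ hcompl₀
  obtain ⟨hG₁C, hG₁CH⟩ := hmap N₁ G₁ hG₁H hN₁ hcompl₁
  refine ⟨C ⊔ W, ?_, ?_, ?_⟩
  · -- C ⊔ W = (H.subtypeL.comp f) ⁻¹' C
    have hset : ((C ⊔ W : Submodule ℝ F) : Set F) = (H.subtypeL.comp f) ⁻¹' (C : Set F) := by
      ext x
      simp only [SetLike.mem_coe, Set.mem_preimage, ContinuousLinearMap.comp_apply,
        Submodule.coe_subtypeL', Submodule.subtype_apply]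
      constructor
      · intro hx
        rw [Submodule.mem_sup] at hx
        obtain ⟨c, hc, w, hw, rfl⟩ := hx
        have h1 : f c = ⟨c, hCH hc⟩ := hf ⟨c, hCH hc⟩
        have h2 : f w = 0 := hw
        rw [map_add, h1, h2, add_zero]
        exact hc
      · intro hx
        have h1 : (x : F) = ((f x : H) : F) + (x - ((f x : H) : F)) := by abel
        rw [h1]
        apply Submodule.add_mem_sup hx
        show x - ((f x : H) : F) ∈ LinearMap.ker (f : F →ₗ[ℝ] H)
        rw [LinearMap.mem_ker, map_sub, ContinuousLinearMap.coe_coe]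
        have h2 : f ((f x : H) : F) = f x := hf (f x)
        rw [h2, sub_self]
    rw [hset]
    exact hCclosed.preimage (H.subtypeL.comp f).continuous
  all_goals apply final_isCompl hcompl hCH
  exacts [⟨hG₀H, hG₀C, hG₀CH⟩, ⟨hG₁H, hG₁C, hG₁CH⟩]

end AuxNormed
end AuxLemmas


variable {E F : Type*}
  [NormedAddCommGroup E] [NormedSpace ℝ E] [CompleteSpace E]
  [NormedAddCommGroup F] [NormedSpace ℝ F] [CompleteSpace F]

/-- An operator `T ∈ B(E,F)` is *double splitting* if its kernel is a closed
subspace admitting a closed complement in `E`, and its range is a closed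
subspace admitting a closed complement in `F`. -/
def IsDoubleSplitting (T : E →L[ℝ] F) : Prop :=
  (∃ R : Submodule ℝ E, IsClosed (R : Set E) ∧ IsCompl (LinearMap.ker (T : E →ₗ[ℝ] F)) R) ∧
  IsClosed (LinearMap.range (T : E →ₗ[ℝ] F) : Set F) ∧
  (∃ S : Submodule ℝ F, IsClosed (S : Set F) ∧ IsCompl (LinearMap.range (T : E →ₗ[ℝ] F)) S)

/-- The *common-complement chain relation* `T₀ ≈ T₁` (Definition 2.1): there
are closed subspaces `N₀ = ker T₀, N₁, …, N_m, N_{m+1} = ker T₁` of `E` with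
common closed complements `R₁, …, R_{m+1}` (`E = N_{i-1} ⊕ R_i = N_i ⊕ R_i`),
and closed subspaces `F₀ = range T₀, F₁, …, F_n, F_{n+1} = range T₁` of `F`
with common closed complements `S₁, …, S_{n+1}`
(`F = F_{j-1} ⊕ S_j = F_j ⊕ S_j`). -/
def ChainRel (T₀ T₁ : E →L[ℝ] F) : Prop :=
  ∃ (m n : ℕ) (N : Fin (m + 2) → Submodule ℝ E) (R : Fin (m + 1) → Submodule ℝ E)
    (G : Fin (n + 2) → Submodule ℝ F) (S : Fin (n + 1) → Submodule ℝ F),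
    (∀ i, IsClosed ((N i : Set E))) ∧ (∀ i, IsClosed ((R i : Set E))) ∧
    (∀ j, IsClosed ((G j : Set F))) ∧ (∀ j, IsClosed ((S j : Set F))) ∧
    N 0 = LinearMap.ker (T₀ : E →ₗ[ℝ] F) ∧ N (Fin.last (m + 1)) = LinearMap.ker (T₁ : E →ₗ[ℝ] F) ∧
    G 0 = LinearMap.range (T₀ : E →ₗ[ℝ] F) ∧ G (Fin.last (n + 1)) = LinearMap.range (T₁ : E →ₗ[ℝ] F) ∧
    (∀ i : Fin (m + 1), IsCompl (N i.castSucc) (R i) ∧ IsCompl (N i.succ) (R i)) ∧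
    (∀ j : Fin (n + 1), IsCompl (G j.castSucc) (S j) ∧ IsCompl (G j.succ) (S j))

open Module Submodule LinearMap in
/-- **Remark (i) after Theorem 2.4.**
If `k < dim E` and `k < dim F` and `T₀ ∈ B(E,F)` has finite-dimensional range
with `dim range T₀ = k`, then the equivalence class
`T̃₀ = { T : T double splitting and T₀ ≈ T }` equals
`F_k = { T : dim range T = k }`. -/
theorem equivalence_class_eq_Fk
    (k : ℕ) (hkE : (k : Cardinal) < Module.rank ℝ E)
    (hkF : (k : Cardinal) < Module.rank ℝ F)
    (T₀ : E →L[ℝ] F)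
    (hT₀fin : FiniteDimensional ℝ (LinearMap.range (T₀ : E →ₗ[ℝ] F)))
    (hT₀rk : Module.finrank ℝ (LinearMap.range (T₀ : E →ₗ[ℝ] F)) = k) :
    {T : E →L[ℝ] F | IsDoubleSplitting T ∧ ChainRel T₀ T} =
      {T : E →L[ℝ] F | FiniteDimensional ℝ (LinearMap.range (T : E →ₗ[ℝ] F)) ∧
        Module.finrank ℝ (LinearMap.range (T : E →ₗ[ℝ] F)) = k} := by
  ext T
  simp only [Set.mem_setOf_eq]
  constructor
  · rintro ⟨-, m, n, N, R, G, S, -, -, -, -, -, -, hG0, hGl, -, hGS⟩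
    have main : ∀ j : Fin (n + 2), FiniteDimensional ℝ (G j) ∧ finrank ℝ (G j) = k := by
      intro j
      induction j using Fin.induction with
      | zero => rw [hG0]; exact ⟨hT₀fin, hT₀rk⟩
      | succ i ih =>
        obtain ⟨h1, h2⟩ := hGS i
        let e : (G i.castSucc) ≃ₗ[ℝ] (G i.succ) :=
          ((Submodule.quotientEquivOfIsCompl _ _ h1.symm).symm.trans
            (Submodule.quotientEquivOfIsCompl _ _ h2.symm))
        haveI := ih.1
        refine ⟨e.finiteDimensional, ?_⟩
        rw [← e.finrank_eq, ih.2]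
    have := main (Fin.last (n + 1))
    rwa [hGl] at this
  · rintro ⟨hfin, hrk⟩
    haveI := hT₀fin
    haveI := hfin
    -- range side
    obtain ⟨S, hSclosed, hS0, hS1⟩ := aux_exists_common_closed_compl
      (LinearMap.range (T₀ : E →ₗ[ℝ] F)) (LinearMap.range (T : E →ₗ[ℝ] F)) (by rw [hT₀rk, hrk])
    -- kernel side
    have e₀ : (E ⧸ LinearMap.ker (T₀ : E →ₗ[ℝ] F)) ≃ₗ[ℝ] LinearMap.range (T₀ : E →ₗ[ℝ] F) :=
      LinearMap.quotKerEquivRange (T₀ : E →ₗ[ℝ] F)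
    have e₁ : (E ⧸ LinearMap.ker (T : E →ₗ[ℝ] F)) ≃ₗ[ℝ] LinearMap.range (T : E →ₗ[ℝ] F) :=
      LinearMap.quotKerEquivRange (T : E →ₗ[ℝ] F)
    haveI : FiniteDimensional ℝ (E ⧸ LinearMap.ker (T₀ : E →ₗ[ℝ] F)) := e₀.symm.finiteDimensional
    haveI : FiniteDimensional ℝ (E ⧸ LinearMap.ker (T : E →ₗ[ℝ] F)) := e₁.symm.finiteDimensional
    obtain ⟨R, hRfin, hR0, hR1⟩ := aux_exists_common_compl
      (LinearMap.ker (T₀ : E →ₗ[ℝ] F)) (LinearMap.ker (T : E →ₗ[ℝ] F)) k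
      (by rw [e₀.finrank_eq]; exact hT₀rk)
      (by rw [e₁.finrank_eq]; exact hrk)
    haveI := hRfin
    have hRclosed : IsClosed (R : Set E) := R.closed_of_finiteDimensional
    have hT₀rc : IsClosed ((LinearMap.range (T₀ : E →ₗ[ℝ] F) : Submodule ℝ F) : Set F) :=
      (LinearMap.range (T₀ : E →ₗ[ℝ] F)).closed_of_finiteDimensional
    have hTrc : IsClosed ((LinearMap.range (T : E →ₗ[ℝ] F) : Submodule ℝ F) : Set F) :=
      (LinearMap.range (T : E →ₗ[ℝ] F)).closed_of_finiteDimensional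
    refine ⟨⟨⟨R, hRclosed, hR1⟩, hTrc, ⟨S, hSclosed, hS1⟩⟩, 0, 0,
      ![LinearMap.ker (T₀ : E →ₗ[ℝ] F), LinearMap.ker (T : E →ₗ[ℝ] F)], fun _ => R,
      ![LinearMap.range (T₀ : E →ₗ[ℝ] F), LinearMap.range (T : E →ₗ[ℝ] F)], fun _ => S,
      ?_, fun _ => hRclosed, ?_, fun _ => hSclosed, rfl, rfl, rfl, rfl, ?_, ?_⟩
    · intro i
      fin_cases i
      · exact ContinuousLinearMap.isClosed_ker T₀
      · exact ContinuousLinearMap.isClosed_ker T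
    · intro j
      fin_cases j
      · exact hT₀rc
      · exact hTrc
    · intro i
      fin_cases i
      exact ⟨hR0, hR1⟩
    · intro j
      fin_cases j
      exact ⟨hS0, hS1⟩
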